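/- Let (X,d) be a complete Busemann convex geodesic space that is additionally δ-hyperbolic, and let A ⊆ X be closed and convex. If A contains a (λ,ε)-quasi-geodesic ray for some λ ≥ 1 and ε ≥ 0, then A contains a geodesic ray. -/

import Mathlib

open Set Filter Metric

section Defs

variable {X : Type*} [MetricSpace X]

/-- A unit-speed geodesic defined on `[a, b]`. -/
def IsGeodesicOn (γ : ℝ → X) (a b : ℝ) : Prop :=
  ∀ s ∈ Set.Icc a b, ∀ t ∈ Set.Icc a b, dist (γ s) (γ t) = |s - t|

/-- `S` is a geodesic segment joining `x` and `y`. -/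
def IsGeodesicSegment (S : Set X) (x y : X) : Prop :=
  ∃ (a b : ℝ) (γ : ℝ → X), a ≤ b ∧ IsGeodesicOn γ a b ∧ γ a = x ∧ γ b = y ∧
    S = γ '' Set.Icc a b

/-- A geodesic space: every two points are joined by a geodesic segment. -/
def GeodesicSpace (X : Type*) [MetricSpace X] : Prop :=
  ∀ x y : X, ∃ S : Set X, IsGeodesicSegment S x y

/-- A uniquely geodesic space. -/
def UniquelyGeodesic (X : Type*) [MetricSpace X] : Prop :=
  ∀ x y : X, ∃! S : Set X, IsGeodesicSegment S x y

/-- `S` is contained in the closed `M`-neighborhood of `T`. -/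
def InClosedNbhd (S T : Set X) (M : ℝ) : Prop :=
  ∀ p ∈ S, ∃ q ∈ T, dist p q ≤ M

/-- A triangle with sides `S1, S2, S3` is `M`-slim. -/
def SlimTriangle (S1 S2 S3 : Set X) (M : ℝ) : Prop :=
  InClosedNbhd S1 (S2 ∪ S3) M ∧ InClosedNbhd S2 (S1 ∪ S3) M ∧ InClosedNbhd S3 (S1 ∪ S2) M

/-- `X` is `δ`-hyperbolic: every geodesic triangle is `δ`-slim. -/
def DeltaHyperbolic (X : Type*) [MetricSpace X] (δ : ℝ) : Prop :=
  ∀ x y z : X, ∀ S1 S2 S3 : Set X,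
    IsGeodesicSegment S1 x y → IsGeodesicSegment S2 y z → IsGeodesicSegment S3 z x →
    SlimTriangle S1 S2 S3 δ

/-- A geodesic ray `γ : [0, ∞) → X`. -/
def IsGeodesicRay (γ : ℝ → X) : Prop :=
  ∀ s ∈ Set.Ici (0:ℝ), ∀ t ∈ Set.Ici (0:ℝ), dist (γ s) (γ t) = |s - t|

/-- A set is geodesically bounded if it contains no geodesic ray. -/
def GeodesicallyBounded (A : Set X) : Prop :=
  ¬ ∃ γ : ℝ → X, IsGeodesicRay γ ∧ ∀ t ∈ Set.Ici (0:ℝ), γ t ∈ A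

/-- A directional curve `γ : [0, ∞) → X` (with some constant `b ≥ 0`). -/
def IsDirectionalCurve (γ : ℝ → X) : Prop :=
  ∃ b : ℝ, 0 ≤ b ∧ ∀ s ∈ Set.Ici (0:ℝ), ∀ t ∈ Set.Ici (0:ℝ),
    |s - t| - b ≤ dist (γ s) (γ t) ∧ dist (γ s) (γ t) ≤ |s - t|

/-- A set is directionally bounded if it contains no directional curve. -/
def DirectionallyBounded (A : Set X) : Prop :=
  ¬ ∃ γ : ℝ → X, IsDirectionalCurve γ ∧ ∀ t ∈ Set.Ici (0:ℝ), γ t ∈ A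

/-- A subset of a geodesic space is convex if every geodesic segment joining two of its
points is contained in it. -/
def GeodesicConvex (A : Set X) : Prop :=
  ∀ x ∈ A, ∀ y ∈ A, ∀ S : Set X, IsGeodesicSegment S x y → S ⊆ A

/-- The comparison point in the Euclidean plane: the point on the segment from `x'` to `y'`
(of length `L`) at distance `t` from `x'`. -/
noncomputable def cmpPt (x' y' : EuclideanSpace ℝ (Fin 2)) (L t : ℝ) :
    EuclideanSpace ℝ (Fin 2) :=
  AffineMap.lineMap x' y' (t / L)

/-- `X` is a CAT(0) space: it is geodesic and for every geodesic triangle and every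
comparison triangle in the Euclidean plane, distances between points on the triangle are
bounded by the distances between the corresponding comparison points. -/
def CAT0Space (X : Type*) [MetricSpace X] : Prop :=
  GeodesicSpace X ∧
  ∀ (x y z : X) (γ1 γ2 γ3 : ℝ → X),
    IsGeodesicOn γ1 0 (dist x y) → γ1 0 = x → γ1 (dist x y) = y →
    IsGeodesicOn γ2 0 (dist y z) → γ2 0 = y → γ2 (dist y z) = z →
    IsGeodesicOn γ3 0 (dist z x) → γ3 0 = z → γ3 (dist z x) = x →
    ∀ x' y' z' : EuclideanSpace ℝ (Fin 2),
      dist x' y' = dist x y → dist y' z' = dist y z → dist z' x' = dist z x →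
      (∀ s ∈ Set.Icc (0:ℝ) (dist x y), ∀ t ∈ Set.Icc (0:ℝ) (dist y z),
        dist (γ1 s) (γ2 t) ≤ dist (cmpPt x' y' (dist x y) s) (cmpPt y' z' (dist y z) t)) ∧
      (∀ s ∈ Set.Icc (0:ℝ) (dist y z), ∀ t ∈ Set.Icc (0:ℝ) (dist z x),
        dist (γ2 s) (γ3 t) ≤ dist (cmpPt y' z' (dist y z) s) (cmpPt z' x' (dist z x) t)) ∧
      (∀ s ∈ Set.Icc (0:ℝ) (dist z x), ∀ t ∈ Set.Icc (0:ℝ) (dist x y),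
        dist (γ3 s) (γ1 t) ≤ dist (cmpPt z' x' (dist z x) s) (cmpPt x' y' (dist x y) t))

/-- Busemann convexity. -/
def BusemannConvex (X : Type*) [MetricSpace X] : Prop :=
  GeodesicSpace X ∧
  ∀ (a b c d : ℝ) (γ σ : ℝ → X), a ≤ b → c ≤ d →
    IsGeodesicOn γ a b → IsGeodesicOn σ c d →
    ∀ t ∈ Set.Icc (0:ℝ) 1,
      dist (γ ((1-t)*a + t*b)) (σ ((1-t)*c + t*d)) ≤
        (1-t) * dist (γ a) (σ c) + t * dist (γ b) (σ d)

/-- A `(lam, eps)`-quasi-geodesic defined on `[a, b]`. -/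
def IsQuasiGeodesicOn (lam eps : ℝ) (γ : ℝ → X) (a b : ℝ) : Prop :=
  ∀ s ∈ Set.Icc a b, ∀ t ∈ Set.Icc a b,
    (1/lam) * |s - t| - eps ≤ dist (γ s) (γ t) ∧ dist (γ s) (γ t) ≤ lam * |s - t| + eps

/-- A `(lam, eps)`-quasi-geodesic ray. -/
def IsQuasiGeodesicRay (lam eps : ℝ) (γ : ℝ → X) : Prop :=
  ∀ s ∈ Set.Ici (0:ℝ), ∀ t ∈ Set.Ici (0:ℝ),
    (1/lam) * |s - t| - eps ≤ dist (γ s) (γ t) ∧ dist (γ s) (γ t) ≤ lam * |s - t| + eps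

/-- A `k`-local `lam`-quasi-geodesic ray: a `(lam, eps)`-quasi-geodesic ray locally,
for every `eps > 0`. -/
def IsLocalQuasiGeodesicRay (k lam : ℝ) (γ : ℝ → X) : Prop :=
  ∀ eps > (0:ℝ), ∀ s ∈ Set.Ici (0:ℝ), ∀ t ∈ Set.Ici (0:ℝ), |s - t| ≤ k →
    (1/lam) * |s - t| - eps ≤ dist (γ s) (γ t) ∧ dist (γ s) (γ t) ≤ lam * |s - t| + eps

/-- `S` is the image of a `lam`-quasi-geodesic joining `x` and `y`
(i.e. a `(lam, eps)`-quasi-geodesic for every `eps > 0`). -/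
def IsQuasiGeodesicSegment (lam : ℝ) (S : Set X) (x y : X) : Prop :=
  ∃ (a b : ℝ) (γ : ℝ → X), a ≤ b ∧ (∀ eps > (0:ℝ), IsQuasiGeodesicOn lam eps γ a b) ∧
    γ a = x ∧ γ b = y ∧ S = γ '' Set.Icc a b

/-- Every `lam`-quasi-geodesic triangle in `X` is `M`-slim. -/
def QuasiGeodesicTrianglesSlim (X : Type*) [MetricSpace X] (lam M : ℝ) : Prop :=
  ∀ x y z : X, ∀ S1 S2 S3 : Set X,
    IsQuasiGeodesicSegment lam S1 x y → IsQuasiGeodesicSegment lam S2 y z →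
    IsQuasiGeodesicSegment lam S3 z x → SlimTriangle S1 S2 S3 M

/-- A play of the Lion-Man game in `A` with speed `D`. -/
def IsLionManPlay (A : Set X) (D : ℝ) (L M : ℕ → X) : Prop :=
  (∀ n, L n ∈ A) ∧ (∀ n, M n ∈ A) ∧
  (∀ n, ∃ S : Set X, IsGeodesicSegment S (L n) (M n) ∧ L (n+1) ∈ S) ∧
  (∀ n, dist (L n) (L (n+1)) = min D (dist (L n) (M n))) ∧
  (∀ n, dist (M n) (M (n+1)) ≤ D)

/-- The lion wins a play if `d(L_{n+1}, M_n) → 0`. -/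
def LionWins (L M : ℕ → X) : Prop :=
  Filter.Tendsto (fun n => dist (L (n+1)) (M n)) Filter.atTop (nhds 0)

/-- The lion always wins the Lion-Man game played in `A`. -/
def LionAlwaysWins (A : Set X) : Prop :=
  ∀ D > (0:ℝ), ∀ L M : ℕ → X, IsLionManPlay A D L M → LionWins L M

end Defs


section Aux

variable {X : Type*} [MetricSpace X]

/-- Reparametrize a geodesic segment on `[0, dist x y]`. -/
lemma segment_param {S : Set X} {x y : X} (h : IsGeodesicSegment S x y) :
    ∃ c : ℝ → X, IsGeodesicOn c 0 (dist x y) ∧ c 0 = x ∧ c (dist x y) = y ∧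
      c '' Set.Icc 0 (dist x y) = S := by
  obtain ⟨a, b, g, hab, hg, ha, hb, hS⟩ := h
  have hd : dist x y = b - a := by
    have h1 := hg a ⟨le_rfl, hab⟩ b ⟨hab, le_rfl⟩
    rw [ha, hb] at h1
    rw [h1, abs_sub_comm, abs_of_nonneg (by linarith)]
  refine ⟨fun t => g (a + t), ?_, ?_, ?_, ?_⟩
  · intro s hs t ht
    rw [hd] at hs ht
    have e := hg (a + s) ⟨by linarith [hs.1], by linarith [hs.2]⟩
      (a + t) ⟨by linarith [ht.1], by linarith [ht.2]⟩
    rw [e]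
    congr 1
    ring
  · simpa using ha
  · have e : a + dist x y = b := by rw [hd]; ring
    simp only [e, hb]
  · rw [hS, hd]
    ext z
    simp only [Set.mem_image, Set.mem_Icc]
    constructor
    · rintro ⟨t, ⟨h0, h1⟩, rfl⟩
      exact ⟨a + t, ⟨by linarith, by linarith⟩, rfl⟩
    · rintro ⟨u, ⟨h0, h1⟩, rfl⟩
      exact ⟨u - a, ⟨by linarith, by linarith⟩, by simp⟩

/-- Reverse a geodesic segment. -/
lemma segment_rev {S : Set X} {x y : X} (h : IsGeodesicSegment S x y) :
    IsGeodesicSegment S y x := by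
  obtain ⟨a, b, g, hab, hg, ha, hb, hS⟩ := h
  refine ⟨a, b, fun t => g (a + b - t), hab, ?_, ?_, ?_, ?_⟩
  · intro s hs t ht
    have e := hg (a + b - s) ⟨by linarith [hs.2], by linarith [hs.1]⟩
      (a + b - t) ⟨by linarith [ht.2], by linarith [ht.1]⟩
    rw [e, abs_sub_comm]
    congr 1
    ring
  · have e : a + b - a = b := by ring
    simp only [e, hb]
  · have e : a + b - b = a := by ring
    simp only [e, ha]
  · rw [hS]
    ext z
    simp only [Set.mem_image, Set.mem_Icc]
    constructor
    · rintro ⟨t, ⟨h0, h1⟩, rfl⟩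
      exact ⟨a + b - t, ⟨by linarith, by linarith⟩, by congr 1; ring⟩
    · rintro ⟨u, ⟨h0, h1⟩, rfl⟩
      exact ⟨a + b - u, ⟨by linarith, by linarith⟩, by congr 1 <;> ring⟩

end Aux

set_option maxHeartbeats 2000000

/-- In a complete Busemann convex space that is additionally `δ`-hyperbolic, if a closed
convex set contains a `(λ, ε)`-quasi-geodesic ray, then it contains a geodesic ray. -/
theorem stmt5 {X : Type*} [MetricSpace X] [CompleteSpace X]
    (hB : BusemannConvex X) (δ : ℝ) (hδ : 0 ≤ δ) (hhyp : DeltaHyperbolic X δ)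
    (A : Set X) (hclosed : IsClosed A) (hconv : GeodesicConvex A)
    (lam eps : ℝ) (hlam : 1 ≤ lam) (heps : 0 ≤ eps)
    (γ : ℝ → X) (hγ : IsQuasiGeodesicRay lam eps γ)
    (hγA : ∀ t ∈ Set.Ici (0:ℝ), γ t ∈ A) :
    ∃ σ : ℝ → X, IsGeodesicRay σ ∧ ∀ t ∈ Set.Ici (0:ℝ), σ t ∈ A := by
  obtain ⟨hgeo, hbus⟩ := hB
  have hlam0 : (0:ℝ) < lam := lt_of_lt_of_le one_pos hlam
  obtain ⟨ρ, hρdef⟩ : ∃ x : ℝ, x = 1 + 1/lam^2 := ⟨_, rfl⟩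
  have hρ1 : 1 < ρ := by
    have h : (0:ℝ) < 1/lam^2 := by positivity
    rw [hρdef]; linarith
  have hρ0 : (0:ℝ) < ρ := by linarith
  obtain ⟨R, hRdef⟩ : ∃ x : ℝ, x = 4*lam*(3*eps/2 + δ + 1) := ⟨_, rfl⟩
  have hR0 : (0:ℝ) < R := by
    rw [hRdef]
    have : (0:ℝ) < 3*eps/2 + δ + 1 := by linarith
    positivity
  obtain ⟨r, hrdef⟩ : ∃ r : ℕ → ℝ, ∀ i, r i = R * ρ^i := ⟨_, fun _ => rfl⟩
  have hr_pos : ∀ i, 0 < r i := by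
    intro i; rw [hrdef]; positivity
  have hrR : ∀ i, R ≤ r i := by
    intro i
    have h1 : (1:ℝ) ≤ ρ^i := one_le_pow₀ hρ1.le
    rw [hrdef]; nlinarith
  have hr_mono : ∀ i j, i ≤ j → r i ≤ r j := by
    intro i j h
    have h1 : ρ^i ≤ ρ^j := pow_le_pow_right₀ hρ1.le h
    rw [hrdef, hrdef]; nlinarith
  have hr_succ : ∀ i, r (i+1) - r i = r i / lam^2 := by
    intro i
    rw [hrdef, hrdef, hρdef, pow_succ]
    have h : lam^2 ≠ 0 := by positivity
    field_simp
    ring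
  have hr_unbounded : ∀ b : ℝ, ∃ N, b ≤ r N := by
    intro b
    obtain ⟨N, hN⟩ := pow_unbounded_of_one_lt (b/R) hρ1
    refine ⟨N, ?_⟩
    rw [div_lt_iff₀ hR0] at hN
    rw [hrdef]; nlinarith
  -- quasi-geodesic estimates
  have hγl : ∀ s : ℝ, 0 ≤ s → s/lam - eps ≤ dist (γ 0) (γ s) := by
    intro s hs
    have h := (hγ 0 Set.self_mem_Ici s (Set.mem_Ici.mpr hs)).1
    rw [zero_sub, abs_neg, abs_of_nonneg hs, one_div, inv_mul_eq_div] at h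
    exact h
  obtain ⟨d, hddef⟩ : ∃ d : ℕ → ℝ, ∀ i, d i = dist (γ 0) (γ (r i)) := ⟨_, fun _ => rfl⟩
  have hd_lb : ∀ i, r i/lam - eps ≤ d i := by
    intro i; rw [hddef]; exact hγl (r i) (hr_pos i).le
  have hside : ∀ i, dist (γ (r i)) (γ (r (i+1))) ≤ r i/lam + eps := by
    intro i
    have h := (hγ (r i) (Set.mem_Ici.mpr (hr_pos i).le)
      (r (i+1)) (Set.mem_Ici.mpr (hr_pos (i+1)).le)).2
    have h2 : r i ≤ r (i+1) := hr_mono i (i+1) (Nat.le_succ i)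
    have habs : |r i - r (i+1)| = r i / lam^2 := by
      rw [abs_sub_comm, abs_of_nonneg (by linarith)]
      linarith [hr_succ i]
    rw [habs] at h
    have he : lam * (r i / lam^2) = r i / lam := by
      field_simp
    linarith [he ▸ h]
  obtain ⟨P, hPdef⟩ : ∃ P : ℕ → ℝ,
      ∀ i, P i = (d i + d (i+1) - dist (γ (r i)) (γ (r (i+1))))/2 := ⟨_, fun _ => rfl⟩
  have hP_lb : ∀ i, r i/(2*lam) - 3*eps/2 ≤ P i := by
    intro i
    have h1 := hd_lb i
    have h2 := hd_lb (i+1)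
    have h3 := hside i
    have h4 : r i / lam ≤ r (i+1) / lam := by
      gcongr
      exact hr_mono i (i+1) (Nat.le_succ i)
    have e1 : r i/(2*lam) = (r i/lam)/2 := by ring
    rw [hPdef]
    linarith
  obtain ⟨T, hTdef⟩ : ∃ T : ℕ → ℝ, ∀ i, T i = P i - (δ + 1) := ⟨_, fun _ => rfl⟩
  have hT_lb : ∀ i, r i/(4*lam) ≤ T i := by
    intro i
    have h1 := hP_lb i
    have h2 := hrR i
    have e1 : R/(4*lam) = 3*eps/2 + δ + 1 := by
      rw [hRdef]
      field_simp
    have h3 : R/(4*lam) ≤ r i/(4*lam) := by gcongr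
    have e2 : r i/(2*lam) = 2*(r i/(4*lam)) := by ring
    rw [hTdef]
    linarith
  have hT_pos : ∀ i, 0 < T i := by
    intro i
    have h1 := hT_lb i
    have h2 : 0 < r i/(4*lam) := div_pos (hr_pos i) (by positivity)
    linarith
  have hT_le1 : ∀ i, T i ≤ d i := by
    intro i
    have htri := dist_triangle (γ 0) (γ (r i)) (γ (r (i+1)))
    rw [← hddef i, ← hddef (i+1)] at htri
    rw [hTdef, hPdef]
    linarith
  have hT_le2 : ∀ i, T i ≤ d (i+1) := by
    intro i
    have htri := dist_triangle (γ 0) (γ (r (i+1))) (γ (r i))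
    rw [dist_comm (γ (r (i+1))) (γ (r i))] at htri
    rw [← hddef i, ← hddef (i+1)] at htri
    rw [hTdef, hPdef]
    linarith
  -- choose the geodesics from γ 0 to γ (r i), inside A
  have hgeoA : ∀ i : ℕ, ∃ c : ℝ → X, IsGeodesicOn c 0 (d i) ∧ c 0 = γ 0 ∧
      c (d i) = γ (r i) ∧ c '' Set.Icc 0 (d i) ⊆ A := by
    intro i
    obtain ⟨S, hS⟩ := hgeo (γ 0) (γ (r i))
    obtain ⟨c, h1, h2, h3, h4⟩ := segment_param hS
    rw [← hddef i] at h1 h3 h4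
    refine ⟨c, h1, h2, h3, ?_⟩
    rw [h4]
    exact hconv (γ 0) (hγA 0 Set.self_mem_Ici) (γ (r i))
      (hγA (r i) (Set.mem_Ici.mpr (hr_pos i).le)) S hS
  choose c hc1 hc2 hc3 hcA using hgeoA
  have hd_nonneg : ∀ i, 0 ≤ d i := by
    intro i; rw [hddef]; exact dist_nonneg
  have hdist0 : ∀ i, ∀ t ∈ Set.Icc 0 (d i), dist (γ 0) (c i t) = t := by
    intro i t ht
    have h := hc1 i 0 ⟨le_rfl, hd_nonneg i⟩ t ht
    rw [hc2 i] at h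
    rw [h, zero_sub, abs_neg, abs_of_nonneg ht.1]
  -- Claim A: consecutive geodesics are 2δ-close at time T i
  have hA : ∀ i, dist (c i (T i)) (c (i+1) (T i)) ≤ 2*δ := by
    intro i
    have hseg1 : IsGeodesicSegment (c i '' Set.Icc 0 (d i)) (γ 0) (γ (r i)) :=
      ⟨0, d i, c i, hd_nonneg i, hc1 i, hc2 i, hc3 i, rfl⟩
    obtain ⟨S2, hseg2⟩ := hgeo (γ (r i)) (γ (r (i+1)))
    have hseg3 : IsGeodesicSegment (c (i+1) '' Set.Icc 0 (d (i+1))) (γ (r (i+1))) (γ 0) :=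
      segment_rev ⟨0, d (i+1), c (i+1), hd_nonneg (i+1), hc1 (i+1), hc2 (i+1), hc3 (i+1), rfl⟩
    have slim := hhyp (γ 0) (γ (r i)) (γ (r (i+1))) _ S2 _ hseg1 hseg2 hseg3
    have hmem : c i (T i) ∈ c i '' Set.Icc 0 (d i) :=
      ⟨T i, ⟨(hT_pos i).le, hT_le1 i⟩, rfl⟩
    obtain ⟨q, hqmem, hqd⟩ := slim.1 (c i (T i)) hmem
    have hdci : dist (γ 0) (c i (T i)) = T i := hdist0 i (T i) ⟨(hT_pos i).le, hT_le1 i⟩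
    rcases hqmem with hq2 | hq3
    · -- q on the far side: contradiction
      exfalso
      obtain ⟨a2, b2, g2, hab2, hg2, ha2, hb2, hS2⟩ := hseg2
      rw [hS2] at hq2
      obtain ⟨u, hu, rfl⟩ := hq2
      have e1 : dist (γ (r i)) (g2 u) = u - a2 := by
        have h := hg2 a2 ⟨le_rfl, hab2⟩ u hu
        rw [ha2] at h
        rw [h, abs_sub_comm, abs_of_nonneg (by linarith [hu.1])]
      have e2 : dist (g2 u) (γ (r (i+1))) = b2 - u := by
        have h := hg2 u hu b2 ⟨hab2, le_rfl⟩
        rw [hb2] at h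
        rw [h, abs_sub_comm, abs_of_nonneg (by linarith [hu.2])]
      have e3 : dist (γ (r i)) (γ (r (i+1))) = b2 - a2 := by
        have h := hg2 a2 ⟨le_rfl, hab2⟩ b2 ⟨hab2, le_rfl⟩
        rw [ha2, hb2] at h
        rw [h, abs_sub_comm, abs_of_nonneg (by linarith)]
      have t1 : d i ≤ dist (γ 0) (g2 u) + (u - a2) := by
        have h := dist_triangle (γ 0) (g2 u) (γ (r i))
        rw [dist_comm (g2 u) (γ (r i)), e1, ← hddef i] at h
        exact h
      have t2 : d (i+1) ≤ dist (γ 0) (g2 u) + (b2 - u) := by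
        have h := dist_triangle (γ 0) (g2 u) (γ (r (i+1)))
        rw [e2, ← hddef (i+1)] at h
        exact h
      have t3 : dist (γ 0) (g2 u) ≤ T i + δ := by
        have h := dist_triangle (γ 0) (c i (T i)) (g2 u)
        rw [hdci] at h
        linarith
      have hP := hPdef i
      rw [e3] at hP
      have hT := hTdef i
      linarith
    · -- q on the other geodesic from γ 0
      obtain ⟨u, hu, rfl⟩ := hq3
      have e0 : dist (γ 0) (c (i+1) u) = u := hdist0 (i+1) u hu
      have e1 : |u - T i| ≤ δ := by
        have h := abs_dist_sub_le (c (i+1) u) (c i (T i)) (γ 0)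
        rw [dist_comm (c (i+1) u) (γ 0), dist_comm (c i (T i)) (γ 0), e0, hdci] at h
        have h2 : dist (c (i+1) u) (c i (T i)) ≤ δ := by
          rw [dist_comm]; exact hqd
        exact le_trans h h2
      have e2 : dist (c (i+1) u) (c (i+1) (T i)) = |u - T i| :=
        hc1 (i+1) u hu (T i) ⟨(hT_pos i).le, hT_le2 i⟩
      calc dist (c i (T i)) (c (i+1) (T i))
          ≤ dist (c i (T i)) (c (i+1) u) + dist (c (i+1) u) (c (i+1) (T i)) :=
            dist_triangle _ _ _
        _ ≤ δ + δ := add_le_add hqd (by rw [e2]; exact e1)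
        _ = 2*δ := by ring
  -- Key estimate via Busemann convexity
  have hKey : ∀ i, ∀ s : ℝ, 0 ≤ s → s ≤ T i →
      dist (c i s) (c (i+1) s) ≤ (8*lam*δ/R)*s*(1/ρ)^i := by
    intro i s hs0 hsT
    have hg1 : IsGeodesicOn (c i) 0 (T i) := by
      intro u hu v hv
      exact hc1 i u ⟨hu.1, hu.2.trans (hT_le1 i)⟩ v ⟨hv.1, hv.2.trans (hT_le1 i)⟩
    have hg2 : IsGeodesicOn (c (i+1)) 0 (T i) := by
      intro u hu v hv
      exact hc1 (i+1) u ⟨hu.1, hu.2.trans (hT_le2 i)⟩ v ⟨hv.1, hv.2.trans (hT_le2 i)⟩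
    have ht01 : s / T i ∈ Set.Icc (0:ℝ) 1 :=
      ⟨div_nonneg hs0 (hT_pos i).le, (div_le_one (hT_pos i)).mpr hsT⟩
    have hb := hbus 0 (T i) 0 (T i) (c i) (c (i+1)) (hT_pos i).le (hT_pos i).le hg1 hg2
      (s/T i) ht01
    have harg : (1 - s/T i)*0 + (s/T i)*(T i) = s := by
      have h := (hT_pos i).ne'
      field_simp
      ring
    rw [harg, hc2 i, hc2 (i+1), dist_self] at hb
    have hb2 : dist (c i s) (c (i+1) s) ≤ (s/T i) * dist (c i (T i)) (c (i+1) (T i)) := by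
      linarith
    have hb3 : (s/T i) * dist (c i (T i)) (c (i+1) (T i)) ≤ (s/T i)*(2*δ) :=
      mul_le_mul_of_nonneg_left (hA i) ht01.1
    have hfrac : s/T i ≤ s*(4*lam)/(r i) := by
      rw [div_le_div_iff₀ (hT_pos i) (hr_pos i)]
      have h1 : r i ≤ T i * (4*lam) := by
        have h := hT_lb i
        rw [div_le_iff₀ (by positivity : (0:ℝ) < 4*lam)] at h
        linarith
      nlinarith
    have hb4 : (s/T i)*(2*δ) ≤ (s*(4*lam)/(r i))*(2*δ) :=
      mul_le_mul_of_nonneg_right hfrac (by linarith)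
    have he : (s*(4*lam)/(r i))*(2*δ) = (8*lam*δ/R)*s*(1/ρ)^i := by
      rw [hrdef, one_div, inv_pow]
      have h1 : R ≠ 0 := hR0.ne'
      have h2 : ρ^i ≠ 0 := by positivity
      field_simp
      ring
    linarith [he ▸ hb4]
  -- geometric summation
  have hChain : ∀ s : ℝ, 0 ≤ s → ∀ i j, i ≤ j → (∀ l, i ≤ l → l < j → s ≤ T l) →
      dist (c i s) (c j s) ≤ (8*lam*δ/R)*(ρ/(ρ-1))*s*((1/ρ)^i - (1/ρ)^j) := by
    intro s hs i j hij hl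
    induction j, hij using Nat.le_induction with
    | base => simp
    | succ j hij ih =>
      have ihh := ih (fun l h1 h2 => hl l h1 (h2.trans (Nat.lt_succ_self j)))
      have hstep := hKey j s hs (hl j hij (Nat.lt_succ_self j))
      have htri := dist_triangle (c i s) (c j s) (c (j+1) s)
      have halg : (8*lam*δ/R)*(ρ/(ρ-1))*s*((1/ρ)^i - (1/ρ)^j) + (8*lam*δ/R)*s*(1/ρ)^j
          = (8*lam*δ/R)*(ρ/(ρ-1))*s*((1/ρ)^i - (1/ρ)^(j+1)) := by
        have hρne : ρ - 1 ≠ 0 := by linarith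
        have hρne' : ρ ≠ 0 := hρ0.ne'
        rw [pow_succ]
        field_simp
        ring
      linarith
  have hCconst : 0 ≤ (8*lam*δ/R)*(ρ/(ρ-1)) := by
    have h1 : 0 ≤ 8*lam*δ/R := by positivity
    have h2 : 0 ≤ ρ/(ρ-1) := by
      apply div_nonneg (by linarith) (by linarith)
    exact mul_nonneg h1 h2
  -- Cauchy and limit
  have hTs_all : ∀ s : ℝ, 0 ≤ s → ∃ N : ℕ, ∀ l, N ≤ l → s ≤ T l := by
    intro s hs
    obtain ⟨N, hN⟩ := hr_unbounded (4*lam*s)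
    refine ⟨N, fun l hle => ?_⟩
    have h1 : r N ≤ r l := hr_mono N l hle
    have h2 : s ≤ r l/(4*lam) := by
      rw [le_div_iff₀ (by positivity : (0:ℝ) < 4*lam)]
      nlinarith
    linarith [hT_lb l]
  have hlim : ∀ s : ℝ, 0 ≤ s → ∃ x : X, Tendsto (fun i => c i s) atTop (nhds x) := by
    intro s hs
    apply cauchySeq_tendsto_of_complete
    rw [Metric.cauchySeq_iff']
    intro ε hε
    obtain ⟨N1, hN1⟩ := hTs_all s hs
    have hinv1 : (1:ℝ)/ρ < 1 := by
      rw [div_lt_one hρ0]; exact hρ1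
    have hinv0 : (0:ℝ) ≤ 1/ρ := by positivity
    obtain ⟨k, hk⟩ := exists_pow_lt_of_lt_one
      (show (0:ℝ) < ε/((8*lam*δ/R)*(ρ/(ρ-1))*s+1) by positivity) hinv1
    refine ⟨max N1 k, fun n hn => ?_⟩
    have hb := hChain s hs (max N1 k) n hn (fun l h1 _ => hN1 l ((le_max_left N1 k).trans h1))
    rw [dist_comm]
    have hpow : (1/ρ)^(max N1 k) ≤ (1/ρ)^k :=
      pow_le_pow_of_le_one hinv0 hinv1.le (le_max_right N1 k)
    have hpn : (0:ℝ) ≤ (1/ρ)^n := by positivity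
    have hpm : (0:ℝ) ≤ (1/ρ)^(max N1 k) := by positivity
    have hCs : 0 ≤ (8*lam*δ/R)*(ρ/(ρ-1))*s := mul_nonneg hCconst hs
    have hk' : ((8*lam*δ/R)*(ρ/(ρ-1))*s) * ((1/ρ)^k) < ε := by
      have hpos : (0:ℝ) < (8*lam*δ/R)*(ρ/(ρ-1))*s+1 := by linarith
      have h5 := mul_lt_mul_of_pos_left hk hpos
      have h6 : ((8*lam*δ/R)*(ρ/(ρ-1))*s+1) * (ε/((8*lam*δ/R)*(ρ/(ρ-1))*s+1)) = ε :=
        mul_div_cancel₀ ε hpos.ne'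
      have h7 : (0:ℝ) ≤ (1/ρ)^k := by positivity
      nlinarith
    calc dist (c (max N1 k) s) (c n s)
        ≤ (8*lam*δ/R)*(ρ/(ρ-1))*s*((1/ρ)^(max N1 k) - (1/ρ)^n) := hb
      _ ≤ (8*lam*δ/R)*(ρ/(ρ-1))*s*((1/ρ)^(max N1 k)) := by
          nlinarith [mul_nonneg hCs hpn]
      _ ≤ (8*lam*δ/R)*(ρ/(ρ-1))*s*((1/ρ)^k) :=
          mul_le_mul_of_nonneg_left hpow hCs
      _ < ε := hk'
  choose F hF using hlim
  refine ⟨fun s => if h : 0 ≤ s then F s h else γ 0, ?_, ?_⟩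
  · intro s hs t ht
    have hs' : 0 ≤ s := Set.mem_Ici.mp hs
    have ht' : 0 ≤ t := Set.mem_Ici.mp ht
    simp only [dif_pos hs', dif_pos ht']
    have h1 : Tendsto (fun i => dist (c i s) (c i t)) atTop
        (nhds (dist (F s hs') (F t ht'))) := (hF s hs').dist (hF t ht')
    have h2 : ∀ᶠ i in atTop, dist (c i s) (c i t) = |s - t| := by
      obtain ⟨N, hN⟩ := hr_unbounded (lam*(max s t + eps))
      filter_upwards [eventually_ge_atTop N] with i hi
      have hr1 : lam*(max s t + eps) ≤ r i := hN.trans (hr_mono N i hi)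
      have hd1 : max s t ≤ d i := by
        have h4 := hd_lb i
        have h3 : max s t + eps ≤ r i / lam := by
          rw [le_div_iff₀ hlam0]; nlinarith
        linarith
      exact hc1 i s ⟨hs', le_trans (le_max_left s t) hd1⟩
        t ⟨ht', le_trans (le_max_right s t) hd1⟩
    exact tendsto_nhds_unique h1 (tendsto_const_nhds.congr' (h2.mono fun i h => h.symm))
  · intro t ht
    have ht' : 0 ≤ t := Set.mem_Ici.mp ht
    simp only [dif_pos ht']
    apply hclosed.mem_of_tendsto (hF t ht')
    obtain ⟨N, hN⟩ := hr_unbounded (lam*(t + eps))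
    filter_upwards [eventually_ge_atTop N] with i hi
    have hr1 : lam*(t + eps) ≤ r i := hN.trans (hr_mono N i hi)
    have hd1 : t ≤ d i := by
      have h4 := hd_lb i
      have h3 : t + eps ≤ r i / lam := by rw [le_div_iff₀ hlam0]; nlinarith
      linarith
    exact hcA i ⟨t, ⟨ht', hd1⟩, rfl⟩
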